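/- Let K be a field of characteristic ≠ 2, and let f ∈ K[x] be a monic reciprocal polynomial of even degree 2n with trace polynomial g ∈ K[x] of degree n, i.e. f(x) = x^n g(x + 1/x). Then disc(f) = (−1)^n f(1) f(−1) · disc(g)² up to a nonzero square in K; in particular, if (−1)^n f(1) f(−1) is a square in K, then disc(f) is a square in K. -/

import Mathlib

open Polynomial
open scoped BigOperators


section Lists
variable {M : Type*} [Field M]

/-- quadratic factor from a pair of roots -/
noncomputable def qpPoly (p : M × M) : M[X] := (X - C p.1) * (X - C p.2)

noncomputable def FplPoly (pl : List (M × M)) : M[X] := (pl.map qpPoly).prod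

noncomputable def GlPoly (l : List M) : M[X] := (l.map fun β => X - C β).prod

def DlVal : List M → M
  | [] => 1
  | β :: t => ((t.map fun γ => (β - γ) ^ 2).prod) * DlVal t

lemma sqswap (u v : M) : (u - v) ^ 2 = (v - u) ^ 2 := by ring

lemma Ekey (a b c d : M) (h1 : a * b = 1) (h2 : c * d = 1) :
    ((c - a) * (c - b)) * ((d - a) * (d - b)) = ((a + b) - (c + d)) ^ 2 := by
  linear_combination (d^2 + 2*c*d + c^2 - b*d - b*c - a*d - a*c + a*b - 1) * h1 +
    (c*d - b*d - b*c + b^2 - a*d - a*c + a^2 + 1) * h2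

lemma monic_qpPoly (p : M × M) : (qpPoly p).Monic :=
  (monic_X_sub_C _).mul (monic_X_sub_C _)

lemma monic_FplPoly (pl : List (M × M)) : (FplPoly pl).Monic := by
  induction pl with
  | nil => exact monic_one
  | cons p t ih => exact ((monic_qpPoly p).mul ih)

lemma monic_GlPoly (l : List M) : (GlPoly l).Monic := by
  induction l with
  | nil => exact monic_one
  | cons β t ih => exact ((monic_X_sub_C β).mul ih)

lemma FplPoly_cons (p : M × M) (t : List (M × M)) :
    FplPoly (p :: t) = qpPoly p * FplPoly t := by simp [FplPoly]

lemma GlPoly_cons (β : M) (t : List M) :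
    GlPoly (β :: t) = (X - C β) * GlPoly t := by simp [GlPoly]

lemma roots_qpPoly (p : M × M) : (qpPoly p).roots = {p.1, p.2} := by
  rw [qpPoly, roots_mul (mul_ne_zero (X_sub_C_ne_zero _) (X_sub_C_ne_zero _)),
    roots_X_sub_C, roots_X_sub_C]
  rfl

lemma roots_FplPoly (pl : List (M × M)) :
    (FplPoly pl).roots = (pl.map fun p => ({p.1, p.2} : Multiset M)).sum := by
  induction pl with
  | nil => simp [FplPoly]
  | cons p t ih =>
      rw [FplPoly_cons, roots_mul (mul_ne_zero (monic_qpPoly p).ne_zero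
        (monic_FplPoly t).ne_zero), roots_qpPoly, ih, List.map_cons, List.sum_cons]

lemma roots_GlPoly (l : List M) : (GlPoly l).roots = ↑l := by
  induction l with
  | nil => simp [GlPoly]
  | cons β t ih =>
      rw [GlPoly_cons, roots_mul (mul_ne_zero (X_sub_C_ne_zero _)
        (monic_GlPoly t).ne_zero), roots_X_sub_C, ih]
      rfl
end Lists

section Lists2
variable {M : Type*} [Field M]

lemma pair_prod_eval (a b x y : M) :
    (({a, b} : Multiset M).map fun r => eval r ((X - C x) * (X - C y))).prod
      = ((a - x) * (a - y)) * ((b - x) * (b - y)) := by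
  simp only [Multiset.insert_eq_cons, Multiset.map_cons, Multiset.map_singleton,
    Multiset.prod_cons, Multiset.prod_singleton, eval_mul, eval_sub, eval_X, eval_C]

lemma roots_FplPoly_cons (p : M × M) (t : List (M × M)) :
    (FplPoly (p :: t)).roots = {p.1, p.2} + (FplPoly t).roots := by
  rw [FplPoly_cons, roots_mul (mul_ne_zero (monic_qpPoly p).ne_zero
    (monic_FplPoly t).ne_zero), roots_qpPoly]

lemma prod_eval_roots_FplPoly (pl : List (M × M)) (h : ∀ p ∈ pl, p.1 * p.2 = 1)
    (c d : M) (hcd : c * d = 1) :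
    ((FplPoly pl).roots.map fun r => eval r ((X - C c) * (X - C d))).prod
      = (pl.map fun s => ((c + d) - (s.1 + s.2)) ^ 2).prod := by
  induction pl with
  | nil => simp [FplPoly]
  | cons p t ih =>
      rw [roots_FplPoly_cons, Multiset.map_add, Multiset.prod_add,
        ih (fun s hs => h s (List.mem_cons_of_mem _ hs)), List.map_cons, List.prod_cons]
      have hp1 : p.1 * p.2 = 1 := h p List.mem_cons_self
      rw [show (({p.1, p.2} : Multiset M).map fun r => eval r ((X - C c) * (X - C d))).prod
          = ((c + d) - (p.1 + p.2)) ^ 2 from by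
        rw [pair_prod_eval]; exact Ekey c d p.1 p.2 hcd hp1]

lemma eval_FplPoly (t : List (M × M)) (x : M) :
    eval x (FplPoly t) = (t.map fun s => (x - s.1) * (x - s.2)).prod := by
  rw [FplPoly, eval_list_prod, List.map_map]
  congr 1
  simp [Function.comp, qpPoly]

lemma prod_deriv_FplPoly (pl : List (M × M)) (h : ∀ p ∈ pl, p.1 * p.2 = 1) :
    ((FplPoly pl).roots.map fun r => eval r (derivative (FplPoly pl))).prod
      = (pl.map fun p => 4 - (p.1 + p.2) ^ 2).prod
        * (DlVal (pl.map fun p => p.1 + p.2)) ^ 2 := by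
  induction pl with
  | nil => simp [FplPoly, DlVal]
  | cons p t ih =>
      have hp1 : p.1 * p.2 = 1 := h p List.mem_cons_self
      have ht : ∀ s ∈ t, s.1 * s.2 = 1 := fun s hs => h s (List.mem_cons_of_mem _ hs)
      have hd : derivative (FplPoly (p :: t)) =
          ((X - C p.2) + (X - C p.1)) * FplPoly t + qpPoly p * derivative (FplPoly t) := by
        rw [FplPoly_cons, qpPoly, derivative_mul, derivative_mul]
        simp only [derivative_X_sub_C]
        ring
      have e1 : eval p.1 (derivative (FplPoly (p :: t)))
          = (p.1 - p.2) * eval p.1 (FplPoly t) := by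
        rw [hd]; simp only [eval_add, eval_mul, eval_sub, eval_X, eval_C, qpPoly]; ring
      have e2 : eval p.2 (derivative (FplPoly (p :: t)))
          = (p.2 - p.1) * eval p.2 (FplPoly t) := by
        rw [hd]; simp only [eval_add, eval_mul, eval_sub, eval_X, eval_C, qpPoly]; ring
      have hcongr : Multiset.map (fun r => eval r (derivative (FplPoly (p :: t))))
            (FplPoly t).roots
          = Multiset.map (fun r => eval r (qpPoly p) * eval r (derivative (FplPoly t)))
            (FplPoly t).roots := by
        refine Multiset.map_congr rfl (fun r hr => ?_)
        have h0 : eval r (FplPoly t) = 0 := isRoot_of_mem_roots hr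
        rw [hd]; simp only [eval_add, eval_mul]; rw [h0]; ring
      have hCprod : ((FplPoly t).roots.map fun r => eval r (qpPoly p)).prod
          = (t.map fun s => ((p.1 + p.2) - (s.1 + s.2)) ^ 2).prod := by
        rw [qpPoly]; exact prod_eval_roots_FplPoly t ht p.1 p.2 hp1
      have hEE : eval p.1 (FplPoly t) * eval p.2 (FplPoly t)
          = (t.map fun s => ((p.1 + p.2) - (s.1 + s.2)) ^ 2).prod := by
        rw [eval_FplPoly, eval_FplPoly, ← List.prod_map_mul]
        congr 1
        refine List.map_congr_left (fun s hs => ?_)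
        rw [← sqswap]
        exact Ekey s.1 s.2 p.1 p.2 (ht s hs) hp1
      have hq : (p.1 - p.2) * (p.2 - p.1) = 4 - (p.1 + p.2) ^ 2 := by
        linear_combination 4 * hp1
      have hD : DlVal ((p :: t).map fun p => p.1 + p.2)
          = (t.map fun s => ((p.1 + p.2) - (s.1 + s.2)) ^ 2).prod
            * DlVal (t.map fun p => p.1 + p.2) := by
        rw [List.map_cons, DlVal, List.map_map]
        rfl
      rw [roots_FplPoly_cons, Multiset.map_add, Multiset.prod_add]
      have hpair : (({p.1, p.2} : Multiset M).map
            fun r => eval r (derivative (FplPoly (p :: t)))).prod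
          = ((p.1 - p.2) * eval p.1 (FplPoly t)) * ((p.2 - p.1) * eval p.2 (FplPoly t)) := by
        simp only [Multiset.insert_eq_cons, Multiset.map_cons, Multiset.map_singleton,
          Multiset.prod_cons, Multiset.prod_singleton, e1, e2]
      rw [hpair, hcongr, Multiset.prod_map_mul, hCprod, ih ht, List.map_cons, List.prod_cons, hD]
      set Cp := (t.map fun s => ((p.1 + p.2) - (s.1 + s.2)) ^ 2).prod
      set E1 := eval p.1 (FplPoly t)
      set E2 := eval p.2 (FplPoly t)
      set Tp := (t.map fun q => 4 - (q.1 + q.2) ^ 2).prod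
      set Dt := DlVal (t.map fun p => p.1 + p.2)
      calc (p.1 - p.2) * E1 * ((p.2 - p.1) * E2) * (Cp * (Tp * Dt ^ 2))
          = ((p.1 - p.2) * (p.2 - p.1)) * (E1 * E2) * Cp * Tp * Dt ^ 2 := by ring
        _ = (4 - (p.1 + p.2) ^ 2) * Cp * Cp * Tp * Dt ^ 2 := by rw [hEE, hq]
        _ = (4 - (p.1 + p.2) ^ 2) * Tp * (Cp * Dt) ^ 2 := by ring

lemma eval_GlPoly (t : List M) (x : M) :
    eval x (GlPoly t) = (t.map fun γ => x - γ).prod := by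
  rw [GlPoly, eval_list_prod, List.map_map]
  congr 1
  simp [Function.comp]

lemma prod_deriv_GlPoly (l : List M) :
    ((GlPoly l).roots.map fun r => eval r (derivative (GlPoly l))).prod
      = (-1) ^ (l.length.choose 2) * DlVal l := by
  induction l with
  | nil => simp [GlPoly, DlVal]
  | cons β t ih =>
      have hd : derivative (GlPoly (β :: t)) = GlPoly t + (X - C β) * derivative (GlPoly t) := by
        rw [GlPoly_cons, derivative_mul, derivative_X_sub_C, one_mul]
      have e1 : eval β (derivative (GlPoly (β :: t))) = eval β (GlPoly t) := by
        rw [hd]; simp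
      have hcongr : Multiset.map (fun r => eval r (derivative (GlPoly (β :: t)))) (↑t : Multiset M)
          = Multiset.map (fun r => (r - β) * eval r (derivative (GlPoly t))) (↑t : Multiset M) := by
        refine Multiset.map_congr rfl (fun r hr => ?_)
        have h0 : eval r (GlPoly t) = 0 := by
          refine isRoot_of_mem_roots ?_
          rw [roots_GlPoly]; exact hr
        rw [hd]; simp only [eval_add, eval_mul, eval_sub, eval_X, eval_C, h0]; ring
      have hroots : (GlPoly (β :: t)).roots = β ::ₘ (↑t : Multiset M) := by
        rw [roots_GlPoly]; rfl
      rw [hroots, Multiset.map_cons, Multiset.prod_cons, hcongr, Multiset.prod_map_mul]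
      have hP : (Multiset.map (fun r => r - β) (↑t : Multiset M)).prod
          = (-1) ^ t.length * (t.map fun γ => β - γ).prod := by
        have : Multiset.map (fun r => r - β) (↑t : Multiset M) = ↑(t.map fun r => (-1) * (β - r)) := by
          rw [← Multiset.map_coe]
          exact Multiset.map_congr rfl (fun r _ => by ring)
        rw [this, Multiset.prod_coe, List.prod_map_mul, List.map_const', List.prod_replicate]
      have hIH : (Multiset.map (fun r => eval r (derivative (GlPoly t))) (↑t : Multiset M)).prod
          = (-1) ^ (t.length.choose 2) * DlVal t := by
        rw [← roots_GlPoly]; exact ih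
      rw [e1, hP, hIH, eval_GlPoly]
      have hPP : (t.map fun γ => β - γ).prod * (t.map fun γ => β - γ).prod
          = (t.map fun γ => (β - γ) ^ 2).prod := by
        rw [← List.prod_map_mul]
        exact congrArg List.prod (List.map_congr_left (fun γ _ => by ring))
      have hsign : ((-1 : M)) ^ t.length * (-1) ^ (t.length.choose 2)
          = (-1) ^ ((β :: t).length.choose 2) := by
        rw [List.length_cons, Nat.choose_succ_succ, Nat.choose_one_right, pow_add]
      calc (t.map fun γ => β - γ).prod * ((-1) ^ t.length * (t.map fun γ => β - γ).prod *
              ((-1) ^ (t.length.choose 2) * DlVal t))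
          = ((-1 : M) ^ t.length * (-1) ^ (t.length.choose 2)) *
              ((t.map fun γ => β - γ).prod * (t.map fun γ => β - γ).prod * DlVal t) := by ring
        _ = (-1) ^ ((β :: t).length.choose 2) * ((t.map fun γ => (β - γ) ^ 2).prod * DlVal t) := by
              rw [hsign, hPP]
        _ = (-1) ^ ((β :: t).length.choose 2) * DlVal (β :: t) := by rw [DlVal]

lemma eval_one_negone (pl : List (M × M)) (h : ∀ p ∈ pl, p.1 * p.2 = 1) :
    eval 1 (FplPoly pl) * eval (-1) (FplPoly pl)
      = (pl.map fun p => 4 - (p.1 + p.2) ^ 2).prod := by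
  rw [eval_FplPoly, eval_FplPoly, ← List.prod_map_mul]
  refine congrArg List.prod (List.map_congr_left (fun s hs => ?_))
  linear_combination (s.1 * s.2 + 3) * h s hs

lemma exists_pairs {M : Type*} [Field M] [IsAlgClosed M] (l : List M) :
    ∃ pl : List (M × M), (pl.map fun p => p.1 + p.2) = l ∧ ∀ p ∈ pl, p.1 * p.2 = 1 := by
  induction l with
  | nil => exact ⟨[], rfl, by simp⟩
  | cons β t ih =>
      obtain ⟨pl, h1, h2⟩ := ih
      have hdeg : (X ^ 2 - C β * X + 1 : M[X]).degree = 2 := by compute_degree!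
      obtain ⟨a, ha⟩ := IsAlgClosed.exists_root (X ^ 2 - C β * X + 1 : M[X])
        (by rw [hdeg]; exact (by decide : (2 : WithBot ℕ) ≠ 0))
      have ha' : a ^ 2 - β * a + 1 = 0 := by
        simpa [IsRoot] using ha
      refine ⟨(a, β - a) :: pl, by simp [h1], ?_⟩
      intro p hp
      rcases List.mem_cons.mp hp with h | h
      · rw [h]; dsimp only; linear_combination -ha'
      · exact h2 p h
end Lists2

section Descent
variable {K A : Type*} [Field K] [Field A] [IsAlgClosed A] [Algebra K A]

lemma const_case (c : K) (p : K[X]) :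
    (((p.map (algebraMap K A)).roots).map
      (fun r => eval r ((C c : K[X]).map (algebraMap K A)))).prod
      ∈ Set.range (algebraMap K A) := by
  refine ⟨c ^ Multiset.card (p.map (algebraMap K A)).roots, ?_⟩
  rw [map_pow]
  rw [map_C]
  simp only [eval_C]
  rw [Multiset.map_const', Multiset.prod_replicate]

lemma prod_eval_roots_mem_range (N : ℕ) : ∀ (q : K[X]), q.natDegree ≤ N → ∀ (p : K[X]),
    (((p.map (algebraMap K A)).roots).map
      (fun r => eval r (q.map (algebraMap K A)))).prod
      ∈ Set.range (algebraMap K A) := by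
  induction N with
  | zero =>
      intro q hq p
      rw [Nat.le_zero] at hq
      rw [eq_C_of_natDegree_eq_zero hq]
      exact const_case _ p
  | succ N ih =>
      intro q hq p
      by_cases h0 : q.natDegree = 0
      · rw [eq_C_of_natDegree_eq_zero h0]
        exact const_case _ p
      by_cases hp : p = 0
      · subst hp
        simp only [Polynomial.map_zero, roots_zero, Multiset.map_zero, Multiset.prod_zero]
        exact ⟨1, map_one _⟩
      have hqne : q ≠ 0 := fun h => h0 (by simp [h])
      set φ := algebraMap K A with hφ
      have hφinj : Function.Injective φ := (algebraMap K A).injective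
      set P := p.map φ with hPdef
      set Q := q.map φ with hQdef
      have hP0 : P ≠ 0 := Polynomial.map_ne_zero hp
      have hQ0 : Q ≠ 0 := Polynomial.map_ne_zero hqne
      have hlp : p.leadingCoeff ≠ 0 := leadingCoeff_ne_zero.mpr hp
      have hlq : q.leadingCoeff ≠ 0 := leadingCoeff_ne_zero.mpr hqne
      set cp := Multiset.card P.roots with hcp
      set cq := Multiset.card Q.roots with hcq
      -- factorizations
      have hQfac : Q = C (φ q.leadingCoeff) * (Q.roots.map fun s => X - C s).prod := by
        have h := (IsAlgClosed.splits Q).eq_prod_roots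
        rwa [leadingCoeff_map] at h
      have hPfac : P = C (φ p.leadingCoeff) * (P.roots.map fun r => X - C r).prod := by
        have h := (IsAlgClosed.splits P).eq_prod_roots
        rwa [leadingCoeff_map] at h
      have hevQ : ∀ r : A, eval r Q = φ q.leadingCoeff * (Q.roots.map fun s => r - s).prod := by
        intro r
        conv_lhs => rw [hQfac]
        rw [eval_mul, eval_C, eval_multiset_prod, Multiset.map_map]
        exact congrArg _ (congrArg Multiset.prod
          (Multiset.map_congr rfl (fun s _ => by simp [Function.comp])))
      have hevP : ∀ s : A, eval s P = φ p.leadingCoeff * (P.roots.map fun r => s - r).prod := by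
        intro s
        conv_lhs => rw [hPfac]
        rw [eval_mul, eval_C, eval_multiset_prod, Multiset.map_map]
        exact congrArg _ (congrArg Multiset.prod
          (Multiset.map_congr rfl (fun r _ => by simp [Function.comp])))
      set DD := (P.roots.map (fun r => (Q.roots.map fun s => r - s).prod)).prod with hDD
      have hT1 : (P.roots.map fun r => eval r Q).prod = φ q.leadingCoeff ^ cp * DD := by
        rw [Multiset.map_congr rfl (fun r _ => hevQ r), Multiset.prod_map_mul,
          Multiset.map_const', Multiset.prod_replicate]
      have hT2 : (Q.roots.map fun s => eval s P).prod
          = φ p.leadingCoeff ^ cq * ((-1) ^ (cp * cq) * DD) := by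
        rw [Multiset.map_congr rfl (fun s _ => hevP s), Multiset.prod_map_mul,
          Multiset.map_const', Multiset.prod_replicate]
        congr 1
        have hinner : ∀ s : A, (P.roots.map fun r => s - r).prod
            = (-1) ^ cp * (P.roots.map fun r => r - s).prod := by
          intro s
          have : Multiset.map (fun r => s - r) P.roots
              = Multiset.map Neg.neg (Multiset.map (fun r => r - s) P.roots) := by
            rw [Multiset.map_map]
            exact Multiset.map_congr rfl (fun r _ => by simp)
          rw [this, Multiset.prod_map_neg, Multiset.card_map]
        rw [Multiset.map_congr rfl (fun s _ => hinner s), Multiset.prod_map_mul,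
          Multiset.map_const', Multiset.prod_replicate, ← pow_mul, hDD,
          Multiset.prod_map_prod_map]
      -- reduction
      set q1 := q * C q.leadingCoeff⁻¹ with hq1
      have hq1m : q1.Monic := monic_mul_leadingCoeff_inv hqne
      set r := p %ₘ q1 with hr
      have hrdeg : r.natDegree ≤ N := by
        by_cases hr0 : r = 0
        · rw [hr0]; simp
        · have h1 : r.degree < q1.degree := degree_modByMonic_lt p hq1m
          have h2 : q1.degree = q.degree := degree_mul_leadingCoeff_inv q hqne
          have := natDegree_lt_natDegree hr0 (h2 ▸ h1)
          omega
      have hmod : ∀ s ∈ Q.roots, eval s P = eval s (r.map φ) := by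
        intro s hs
        have h1 : r + q1 * (p /ₘ q1) = p := modByMonic_add_div p q1
        have h2 : P = r.map φ + (q1.map φ) * ((p /ₘ q1).map φ) := by
          conv_lhs => rw [hPdef, ← h1]
          rw [Polynomial.map_add, Polynomial.map_mul]
        have h3 : eval s (q1.map φ) = 0 := by
          rw [hq1, Polynomial.map_mul, map_C, eval_mul, eval_C]
          have : eval s Q = 0 := isRoot_of_mem_roots hs
          rw [this, zero_mul]
        rw [h2, eval_add, eval_mul, h3, zero_mul, add_zero]
      obtain ⟨v, hv⟩ := ih r hrdeg q
      have hT2' : (Q.roots.map fun s => eval s P).prod = φ v := by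
        rw [Multiset.map_congr rfl hmod]
        exact hv.symm
      -- combine
      refine ⟨q.leadingCoeff ^ cp * (p.leadingCoeff⁻¹) ^ cq * (-1) ^ (cp * cq) * v, ?_⟩
      have hDDval : DD = (φ p.leadingCoeff)⁻¹ ^ cq * (-1) ^ (cp * cq) * φ v := by
        have := hT2'.symm.trans hT2
        have hne : (φ p.leadingCoeff) ^ cq ≠ 0 := pow_ne_zero _ (by
          simpa using hlp)
        have hsq : ((-1 : A) ^ (cp * cq)) * ((-1 : A) ^ (cp * cq)) = 1 := by
          rw [← pow_add, ← two_mul, pow_mul]; norm_num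
        calc DD = ((φ p.leadingCoeff ^ cq)⁻¹ * φ p.leadingCoeff ^ cq)
              * ((-1 : A) ^ (cp * cq) * (-1) ^ (cp * cq)) * DD := by
                rw [inv_mul_cancel₀ hne, hsq]; ring
          _ = (φ p.leadingCoeff)⁻¹ ^ cq * (-1) ^ (cp * cq) * φ v := by rw [this, inv_pow]; ring
      rw [hT1, hDDval]
      simp only [map_mul, map_pow, map_inv₀, map_neg, map_one]
      ring
end Descent


/-- The discriminant of a monic polynomial `f` over a field `K`, computed in an algebraic
closure of `K` as `(-1)^(d(d-1)/2) ∏ᵢ f'(rᵢ)`, where `r₁,…,r_d` are the roots of `f`. -/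
noncomputable def polyDisc {K : Type*} [Field K] (f : Polynomial K) : AlgebraicClosure K :=
  (-1 : AlgebraicClosure K) ^ (f.natDegree * (f.natDegree - 1) / 2) *
    ((f.aroots (AlgebraicClosure K)).map fun r => aeval r (derivative f)).prod

/-- Let `f` be a monic reciprocal polynomial of even degree `2n` over a field of characteristic
`≠ 2`, with trace polynomial `g` of degree `n` (so `f(x) = xⁿ g(x + 1/x)`). Then
`disc(f) = (-1)ⁿ f(1) f(-1) · disc(g)²` up to a nonzero square in `K`; in particular, if
`(-1)ⁿ f(1) f(-1)` is a square in `K`, then `disc(f)` is a square in `K`. -/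
theorem disc_reciprocal_trace {K : Type*} [Field K] (hchar : (2 : K) ≠ 0) (n : ℕ)
    (f g : Polynomial K) (hf : f.Monic) (hdeg : f.natDegree = 2 * n)
    (hrec : f.reverse = f) (hg : g.natDegree = n)
    (htr : f = ∑ i ∈ Finset.range (n + 1), C (g.coeff i) * X ^ (n - i) * (X ^ 2 + 1) ^ i) :
    (∃ c : K, c ≠ 0 ∧
        polyDisc f =
          algebraMap K (AlgebraicClosure K) ((-1) ^ n * f.eval 1 * f.eval (-1) * c ^ 2) *
            polyDisc g ^ 2) ∧
      ((∃ t : K, (-1 : K) ^ n * f.eval 1 * f.eval (-1) = t ^ 2) →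
        ∃ u : K, polyDisc f = algebraMap K (AlgebraicClosure K) u ^ 2) := by
  classical
  -- g is monic
  have hc2n : f.coeff (2 * n) = 1 := by
    have := hf.coeff_natDegree; rwa [hdeg] at this
  have hX21m : ((X : K[X]) ^ 2 + 1).Monic := by
    have := monic_X_pow_add_C (1 : K) (two_ne_zero)
    rwa [map_one] at this
  have hX21deg : ((X : K[X]) ^ 2 + 1).natDegree = 2 := by
    have := natDegree_X_pow_add_C (n := 2) (r := (1 : K))
    rwa [map_one] at this
  have hfg : f.coeff (2 * n) = g.coeff n := by
    conv_lhs => rw [htr]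
    rw [finset_sum_coeff, Finset.sum_eq_single n]
    · rw [Nat.sub_self, pow_zero, mul_one, coeff_C_mul]
      have hdd : (((X : K[X]) ^ 2 + 1) ^ n).natDegree = 2 * n := by
        rw [hX21m.natDegree_pow, hX21deg, mul_comm]
      rw [show 2 * n = (((X : K[X]) ^ 2 + 1) ^ n).natDegree from hdd.symm,
        (hX21m.pow n).coeff_natDegree, mul_one]
    · intro i hi hne
      have hlt : i < n := by
        have := Finset.mem_range.mp hi; omega
      refine coeff_eq_zero_of_natDegree_lt ?_
      calc (C (g.coeff i) * X ^ (n - i) * ((X : K[X]) ^ 2 + 1) ^ i).natDegree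
          ≤ (C (g.coeff i) * X ^ (n - i)).natDegree + (((X : K[X]) ^ 2 + 1) ^ i).natDegree :=
            natDegree_mul_le
        _ ≤ ((C (g.coeff i)).natDegree + ((X : K[X]) ^ (n - i)).natDegree)
              + (((X : K[X]) ^ 2 + 1) ^ i).natDegree := by
            exact Nat.add_le_add_right natDegree_mul_le _
        _ = (0 + (n - i)) + i * 2 := by
            rw [natDegree_C, natDegree_X_pow, hX21m.natDegree_pow, hX21deg]
        _ < 2 * n := by omega
    · intro h; exact absurd (Finset.self_mem_range_succ n) h
  have hgm : g.Monic := by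
    rw [Monic, leadingCoeff, hg]
    exact hfg.symm.trans hc2n
  -- setup over the algebraic closure
  have hGm : (g.map (algebraMap K (AlgebraicClosure K))).Monic := hgm.map _
  have hGdeg : (g.map (algebraMap K (AlgebraicClosure K))).natDegree = n := by
    rw [hgm.natDegree_map]; exact hg
  have hsplits : Splits
      (g.map (algebraMap K (AlgebraicClosure K))) := IsAlgClosed.splits _
  have hcard : Multiset.card (g.map (algebraMap K (AlgebraicClosure K))).roots = n :=
    (splits_iff_card_roots.mp hsplits).trans hGdeg
  obtain ⟨l0, hl0⟩ : ∃ l : List (AlgebraicClosure K),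
      (↑l : Multiset (AlgebraicClosure K)) = (g.map (algebraMap K (AlgebraicClosure K))).roots :=
    ⟨(g.map (algebraMap K (AlgebraicClosure K))).roots.toList, Multiset.coe_toList _⟩
  have hlen : l0.length = n := by
    rw [← hcard, ← hl0, Multiset.coe_card]
  have hGprod : g.map (algebraMap K (AlgebraicClosure K)) = GlPoly l0 := by
    have h := hsplits.eq_prod_roots_of_monic hGm
    rw [← hl0] at h
    rw [h, GlPoly, Multiset.map_coe, Multiset.prod_coe]
  obtain ⟨pl, hpl, hone⟩ := exists_pairs l0
  have hplen : pl.length = n := by rw [← hlen, ← hpl, List.length_map]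
  -- the factorization of f over the closure
  have hWn : ∀ x : AlgebraicClosure K, x ≠ 0 →
      eval x (f.map (algebraMap K (AlgebraicClosure K))) = eval x (FplPoly pl) := by
    intro x hx
    have hinv : x * x⁻¹ = 1 := mul_inv_cancel₀ hx
    have hL : eval x (f.map (algebraMap K (AlgebraicClosure K)))
        = ∑ i ∈ Finset.range (n + 1),
            algebraMap K (AlgebraicClosure K) (g.coeff i) * x ^ (n - i) * (x ^ 2 + 1) ^ i := by
      conv_lhs => rw [htr]
      simp [Polynomial.map_sum, Polynomial.map_mul, Polynomial.map_pow, Polynomial.map_add,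
        Polynomial.map_one, map_C, map_X, eval_finset_sum]
    have hterm : ∀ i ∈ Finset.range (n + 1),
        algebraMap K (AlgebraicClosure K) (g.coeff i) * x ^ (n - i) * (x ^ 2 + 1) ^ i
          = x ^ n * (algebraMap K (AlgebraicClosure K) (g.coeff i) * (x + x⁻¹) ^ i) := by
      intro i hi
      have hle : i ≤ n := Nat.lt_succ_iff.mp (Finset.mem_range.mp hi)
      have h2 : x ^ 2 + 1 = x * (x + x⁻¹) := by
        field_simp
      calc algebraMap K (AlgebraicClosure K) (g.coeff i) * x ^ (n - i) * (x ^ 2 + 1) ^ i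
          = algebraMap K (AlgebraicClosure K) (g.coeff i) * (x ^ (n - i) * x ^ i)
              * (x + x⁻¹) ^ i := by rw [h2, mul_pow]; ring
        _ = x ^ n * (algebraMap K (AlgebraicClosure K) (g.coeff i) * (x + x⁻¹) ^ i) := by
            rw [← pow_add, Nat.sub_add_cancel hle]; ring
    have hR : eval x (FplPoly pl)
        = x ^ n * eval (x + x⁻¹) (g.map (algebraMap K (AlgebraicClosure K))) := by
      rw [eval_FplPoly]
      have hstep : ∀ s ∈ pl, (x - s.1) * (x - s.2) = x * ((x + x⁻¹) - (s.1 + s.2)) := by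
        intro s hs
        linear_combination hone s hs - hinv
      rw [List.map_congr_left hstep]
      have : (pl.map fun s => x * ((x + x⁻¹) - (s.1 + s.2)))
          = pl.map fun s => (fun _ : (AlgebraicClosure K) × (AlgebraicClosure K) => x) s
              * ((x + x⁻¹) - (s.1 + s.2)) := rfl
      rw [this, List.prod_map_mul, List.map_const', List.prod_replicate, hplen]
      congr 1
      rw [hGprod, eval_GlPoly, ← hpl, List.map_map]
      rfl
    rw [hL, Finset.sum_congr rfl hterm, ← Finset.mul_sum, hR]
    congr 1
    rw [eval_eq_sum_range, hGdeg]
    refine Finset.sum_congr rfl (fun i _ => ?_)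
    rw [coeff_map]
  have hFeq : f.map (algebraMap K (AlgebraicClosure K)) = FplPoly pl := by
    refine mul_left_cancel₀ (X_ne_zero : (X : (AlgebraicClosure K)[X]) ≠ 0)
      (Polynomial.funext fun x => ?_)
    rw [eval_mul, eval_mul, eval_X]
    by_cases hx : x = 0
    · rw [hx, zero_mul, zero_mul]
    · rw [hWn x hx]
  -- aeval of derivative as eval over the closure
  have haev : ∀ (p : K[X]) (r : AlgebraicClosure K),
      aeval r (derivative p) = eval r (derivative (p.map (algebraMap K (AlgebraicClosure K)))) := by
    intro p r
    rw [derivative_map, eval_map, aeval_def]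
  -- polyDisc f
  have hexpf : 2 * n * (2 * n - 1) / 2 = n * (2 * n - 1) := by
    have h : 2 * n * (2 * n - 1) = 2 * (n * (2 * n - 1)) := by ring
    rw [h, Nat.mul_div_cancel_left _ (by norm_num : 0 < 2)]
  have hDf : polyDisc f = (-1) ^ (n * (2 * n - 1)) *
      ((pl.map fun p => 4 - (p.1 + p.2) ^ 2).prod
        * DlVal (pl.map fun p => p.1 + p.2) ^ 2) := by
    rw [polyDisc, hdeg, hexpf, aroots_def]
    congr 1
    rw [Multiset.map_congr rfl (fun r _ => haev f r), hFeq]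
    exact prod_deriv_FplPoly pl hone
  have hsq1 : ∀ m : ℕ, (-1 : AlgebraicClosure K) ^ m * (-1 : AlgebraicClosure K) ^ m = 1 := by
    intro m; rw [← pow_add, ← two_mul, pow_mul]; norm_num
  have hDg : polyDisc g = DlVal l0 := by
    rw [polyDisc, hg, aroots_def]
    rw [Multiset.map_congr rfl (fun r _ => haev g r), hGprod]
    rw [prod_deriv_GlPoly l0, hlen, Nat.choose_two_right, ← mul_assoc, hsq1, one_mul]
  -- eval at 1 and -1
  have hEval1 : algebraMap K (AlgebraicClosure K) (f.eval 1)
      = eval 1 (f.map (algebraMap K (AlgebraicClosure K))) := by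
    rw [eval_map]
    have h := eval₂_at_apply (p := f) (algebraMap K (AlgebraicClosure K)) 1
    rw [map_one] at h
    exact h.symm
  have hEvalm1 : algebraMap K (AlgebraicClosure K) (f.eval (-1))
      = eval (-1) (f.map (algebraMap K (AlgebraicClosure K))) := by
    rw [eval_map]
    have h := eval₂_at_apply (p := f) (algebraMap K (AlgebraicClosure K)) (-1)
    rw [map_neg, map_one] at h
    exact h.symm
  have hprod41 : (pl.map fun p => 4 - (p.1 + p.2) ^ 2).prod
      = algebraMap K (AlgebraicClosure K) (f.eval 1 * f.eval (-1)) := by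
    rw [map_mul, hEval1, hEvalm1, hFeq]
    exact (eval_one_negone pl hone).symm
  have hsign : ((-1 : AlgebraicClosure K)) ^ (n * (2 * n - 1))
      = algebraMap K (AlgebraicClosure K) ((-1) ^ n) := by
    rw [map_pow, map_neg, map_one]
    rcases Nat.even_or_odd n with he | ho
    · rw [he.neg_one_pow, pow_mul, he.neg_one_pow, one_pow]
    · have h1 : Odd (n * (2 * n - 1)) := by
        refine ho.mul ?_
        have : n ≥ 1 := ho.pos
        exact ⟨n - 1, by omega⟩
      rw [h1.neg_one_pow, ho.neg_one_pow]
  have hmain : polyDisc f = algebraMap K (AlgebraicClosure K)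
      ((-1) ^ n * f.eval 1 * f.eval (-1) * (1 : K) ^ 2) * polyDisc g ^ 2 := by
    rw [hDf, hDg, hprod41, hsign, hpl]
    simp only [map_mul, map_pow, map_neg, map_one, one_pow, mul_one]
    ring
  refine ⟨⟨1, one_ne_zero, hmain⟩, ?_⟩
  rintro ⟨t, ht⟩
  -- polyDisc g is rational over K
  obtain ⟨v, hv⟩ := prod_eval_roots_mem_range (A := AlgebraicClosure K)
    (derivative g).natDegree (derivative g) le_rfl g
  have hDgrange : polyDisc g = algebraMap K (AlgebraicClosure K) ((-1) ^ (n * (n - 1) / 2) * v) := by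
    rw [polyDisc, hg, aroots_def]
    rw [Multiset.map_congr rfl (fun r _ => haev g r)]
    simp only [derivative_map]
    rw [map_mul, map_pow, map_neg, map_one, hv]
  refine ⟨t * ((-1) ^ (n * (n - 1) / 2) * v), ?_⟩
  rw [hmain, hDgrange, ← map_pow, ← map_pow, ← map_mul]
  congr 1
  linear_combination ((-1 : K) ^ (n * (n - 1) / 2) * v) ^ 2 * ht
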